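/- For a proper lsc convex f and h := f^{FY}, the enlargement T̆_{f^{FY}}(ε, x) := {x* : (x*, x) ∈ ∂_{2ε} f^{FY}(x, x*)} equals the Brøndsted–Rockafellar enlargement: T̆_{f^{FY}}(ε, x) = ∂_ε f(x) for all ε ≥ 0 and x ∈ X. -/

import Mathlib

open NormedSpace

noncomputable section

/-- Convexity for extended-real-valued functions. -/
def EConvexOn {E : Type*} [AddCommMonoid E] [Module ℝ E] (f : E → EReal) : Prop :=
  ∀ x y : E, ∀ a b : ℝ, 0 ≤ a → 0 ≤ b → a + b = 1 →
    f (a • x + b • y) ≤ (a : EReal) * f x + (b : EReal) * f y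

/-- Properness: somewhere finite and never `⊥` (i.e. values in `ℝ ∪ {+∞}`). -/
def EProper {E : Type*} (f : E → EReal) : Prop :=
  (∃ x, f x ≠ ⊤) ∧ ∀ x, f x ≠ ⊥

variable {X : Type*} [NormedAddCommGroup X] [NormedSpace ℝ X]

/-- The ε-subdifferential of `f : X → ℝ ∪ {+∞}` at `x`. -/
def epsSubdiff (f : X → EReal) (ε : ℝ) (x : X) : Set (StrongDual ℝ X) :=
  {p | f x ≠ ⊤ ∧ ∀ y : X, f x + ((p (y - x) : ℝ) : EReal) ≤ f y + (ε : EReal)}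

/-- The Fenchel conjugate of `f : X → ℝ ∪ {+∞}`. -/
def fconj (f : X → EReal) (p : StrongDual ℝ X) : EReal :=
  ⨆ y : X, ((p y : ℝ) : EReal) - f y

/-- The duality pairing `⟨x, x*⟩` on `X × X*`. -/
def pairing (z : X × StrongDual ℝ X) : ℝ := z.2 z.1

/-- `h* ∘ i`, the conjugate of `h : X × X* → ℝ ∪ {+∞}` with respect to the pairing
`⟨(x,x*),(y*,y)⟩ = ⟨x,y*⟩ + ⟨y,x*⟩`, composed with the swap `i(x,x*) = (x*,x)`. -/
def conjI (h : X × StrongDual ℝ X → EReal) (z : X × StrongDual ℝ X) : EReal :=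
  ⨆ w : X × StrongDual ℝ X, ((z.2 w.1 + w.2 z.1 : ℝ) : EReal) - h w

/-- The averaging map `A h := (1/2)(h + h* ∘ i)`. -/
def Amap (h : X × StrongDual ℝ X → EReal) : X × StrongDual ℝ X → EReal :=
  fun z => (((1 : ℝ)/2 : ℝ) : EReal) * (h z + conjI h z)

/-- Monotone multivalued operator `T : X ⇉ X*`. -/
def IsMonotoneOp (T : X → Set (StrongDual ℝ X)) : Prop :=
  ∀ ⦃x p y q⦄, p ∈ T x → q ∈ T y → 0 ≤ (p - q) (x - y)

/-- Maximally monotone operator. -/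
def IsMaxMonotoneOp (T : X → Set (StrongDual ℝ X)) : Prop :=
  IsMonotoneOp T ∧ ∀ x p, (∀ y q, q ∈ T y → 0 ≤ (p - q) (x - y)) → p ∈ T x

/-- The Fitzpatrick family `H(T)`: lsc convex `h ≥ ⟨·,·⟩` with equality on `gph T`. -/
def InFitzFamily (T : X → Set (StrongDual ℝ X)) (h : X × StrongDual ℝ X → EReal) : Prop :=
  LowerSemicontinuous h ∧ EConvexOn h ∧ (∀ z, (pairing z : EReal) ≤ h z) ∧
    ∀ x p, p ∈ T x → h (x, p) = (pairing (x, p) : EReal)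

/-- The δ-subdifferential of `h : X × X* → ℝ ∪ {+∞}` with respect to the pairing
`⟨(x,x*),(y*,y)⟩ = ⟨x,y*⟩ + ⟨y,x*⟩`. -/
def epsSubdiff2 (h : X × StrongDual ℝ X → EReal) (δ : ℝ) (z : X × StrongDual ℝ X) :
    Set (StrongDual ℝ X × X) :=
  {w | h z ≠ ⊤ ∧ ∀ u : X × StrongDual ℝ X,
    h z + ((w.1 (u.1 - z.1) + (u.2 - z.2) w.2 : ℝ) : EReal) ≤ h u + (δ : EReal)}

/-- The Fenchel–Young function `f^{FY}(x,x*) = f(x) + f*(x*)`. -/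
def FYfn (f : X → EReal) (z : X × StrongDual ℝ X) : EReal := f z.1 + fconj f z.2


section AuxLemmas

open Topology Filter

variable {X : Type*} [NormedAddCommGroup X] [NormedSpace ℝ X]

lemma fconj_lower (f : X → EReal) (p : StrongDual ℝ X) (y : X) :
    ((p y : ℝ) : EReal) - f y ≤ fconj f p := by
  unfold fconj; exact le_iSup (fun y => ((p y : ℝ) : EReal) - f y) y

lemma affine_minorant (f : X → EReal) (hbot : ∀ y, f y ≠ ⊥)
    (hconv : EConvexOn f) (hlsc : LowerSemicontinuous f) (x : X) (hxt : f x ≠ ⊤)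
    (c : ℝ) (hc : (c : EReal) < f x) :
    ∃ (q : StrongDual ℝ X) (b : ℝ), (∀ y : X, ((q y - b : ℝ) : EReal) ≤ f y) ∧ c < q x - b := by
  set S : Set (X × ℝ) := {z | f z.1 ≤ (z.2 : EReal)} with hS
  have hSconv : Convex ℝ S := by
    rintro ⟨y1, t1⟩ h1 ⟨y2, t2⟩ h2 a b ha hb hab
    simp only [hS, Set.mem_setOf_eq, Prod.fst_add, Prod.snd_add, Prod.smul_fst,
      Prod.smul_snd, smul_eq_mul] at h1 h2 ⊢
    calc f (a • y1 + b • y2) ≤ (a : EReal) * f y1 + (b : EReal) * f y2 :=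
          hconv y1 y2 a b ha hb hab
      _ ≤ (a : EReal) * (t1 : EReal) + (b : EReal) * (t2 : EReal) := by
          gcongr
      _ = ((a * t1 + b * t2 : ℝ) : EReal) := by
          rw [← EReal.coe_mul, ← EReal.coe_mul, ← EReal.coe_add]
  have hSclosed : IsClosed S := by
    rw [← isOpen_compl_iff]
    rw [isOpen_iff_mem_nhds]
    rintro ⟨y, t⟩ hz
    simp only [hS, Set.mem_compl_iff, Set.mem_setOf_eq, not_le] at hz
    obtain ⟨d, hd1, hd2⟩ := EReal.exists_between_coe_real hz
    have h1 := (hlsc y d hd2).prod_inl (𝓝 t)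
    have h2 := (eventually_lt_nhds (EReal.coe_lt_coe_iff.1 hd1)).prod_inr (𝓝 y)
    have h3 := h1.and h2
    rw [← nhds_prod_eq] at h3
    exact h3.mono fun w hw => by
      simp only [hS, Set.mem_compl_iff, Set.mem_setOf_eq, not_le]
      exact lt_trans (EReal.coe_lt_coe_iff.2 hw.2) hw.1
  have hxS : (x, c) ∉ S := by
    simp only [hS, Set.mem_setOf_eq]; exact not_le.2 hc
  obtain ⟨ℓ, u, hu1, hu2⟩ := geometric_hahn_banach_closed_point hSconv hSclosed hxS
  set g : StrongDual ℝ X := ℓ.comp (ContinuousLinearMap.inl ℝ X ℝ) with hg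
  set r : ℝ := ℓ (0, 1) with hrdef
  have hdec : ∀ (y : X) (t : ℝ), ℓ (y, t) = g y + t * r := by
    intro y t
    have hyt : (y, t) = ((y, (0 : ℝ)) : X × ℝ) + t • ((0 : X), (1 : ℝ)) := by
      simp [Prod.ext_iff]
    rw [hyt, map_add, map_smul, smul_eq_mul]
    simp [hg, hrdef]
  have hAx : f x = (((f x).toReal : ℝ) : EReal) := (EReal.coe_toReal hxt (hbot x)).symm
  set A := (f x).toReal with hAdef
  have hcA : c < A := by
    rw [hAx] at hc; exact_mod_cast hc
  have hxSA : (x, A) ∈ S := by simp only [hS, Set.mem_setOf_eq]; rw [hAx]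
  have hrneg : r < 0 := by
    by_contra hr
    push_neg at hr
    have e1 := hu1 _ hxSA
    rw [hdec] at e1
    have e2 := hu2
    rw [hdec] at e2
    nlinarith [mul_le_mul_of_nonneg_right hcA.le hr]
  set m : ℝ := -r with hm
  have hmpos : 0 < m := by simp only [hm]; linarith
  refine ⟨m⁻¹ • g, m⁻¹ * u, fun y => ?_, ?_⟩
  · by_cases hyt : f y = ⊤
    · rw [hyt]; exact le_top
    · have hyA : f y = (((f y).toReal : ℝ) : EReal) := (EReal.coe_toReal hyt (hbot y)).symm
      set t0 := (f y).toReal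
      have hyS : (y, t0) ∈ S := by simp only [hS, Set.mem_setOf_eq]; rw [hyA]
      have e1 := hu1 _ hyS
      rw [hdec] at e1
      have key : m⁻¹ * g y - m⁻¹ * u < t0 := by
        rw [← mul_sub]
        have h4 : g y - u < t0 * m := by simp only [hm]; linarith
        calc m⁻¹ * (g y - u) < m⁻¹ * (t0 * m) :=
              mul_lt_mul_of_pos_left h4 (inv_pos.2 hmpos)
          _ = t0 := by field_simp
      rw [hyA]
      simp only [ContinuousLinearMap.smul_apply, smul_eq_mul]
      exact_mod_cast key.le
  · have e2 := hu2
    rw [hdec] at e2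
    simp only [ContinuousLinearMap.smul_apply, smul_eq_mul]
    have h4 : c * m < g x - u := by simp only [hm]; linarith
    have h5 : m⁻¹ * (c * m) < m⁻¹ * (g x - u) := mul_lt_mul_of_pos_left h4 (inv_pos.2 hmpos)
    rw [show m⁻¹ * (c * m) = c by field_simp] at h5
    rw [mul_sub] at h5
    linarith

end AuxLemmas

/-- for `h = f^{FY}`, the enlargement `T̆_{f^{FY}}` coincides with
the Brøndsted–Rockafellar enlargement (the ε-subdifferential). -/
theorem statement15 (f : X → EReal) (hproper : EProper f)
    (hconv : EConvexOn f) (hlsc : LowerSemicontinuous f) :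
    ∀ ε : ℝ, 0 ≤ ε → ∀ x : X,
      {p : StrongDual ℝ X | (p, x) ∈ epsSubdiff2 (FYfn f) (2 * ε) (x, p)} =
        epsSubdiff f ε x := by
  obtain ⟨x0, hx0t⟩ := hproper.1
  have hbot := hproper.2
  intro ε hε x
  ext p
  simp only [Set.mem_setOf_eq, epsSubdiff2, epsSubdiff, FYfn]
  have hfcbot : ∀ q : StrongDual ℝ X, fconj f q ≠ ⊥ := by
    intro q h
    have h1 := fconj_lower f q x0
    rw [h, le_bot_iff, ← EReal.coe_toReal hx0t (hbot x0), ← EReal.coe_sub] at h1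
    exact EReal.coe_ne_bot _ h1
  constructor
  · rintro ⟨hne, hineq⟩
    have hfxt : f x ≠ ⊤ := fun h => hne (by rw [h, EReal.top_add_of_ne_bot (hfcbot p)])
    have hfct : fconj f p ≠ ⊤ := fun h => hne (by rw [h, EReal.add_top_of_ne_bot (hbot x)])
    have hAx : f x = (((f x).toReal : ℝ) : EReal) := (EReal.coe_toReal hfxt (hbot x)).symm
    have hBx : fconj f p = (((fconj f p).toReal : ℝ) : EReal) :=
      (EReal.coe_toReal hfct (hfcbot p)).symm
    set A := (f x).toReal with hA
    set B := (fconj f p).toReal with hB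
    have key : A + B ≤ p x + ε := by
      by_contra hk
      push_neg at hk
      set η := (A + B - (p x + ε)) / 2 with hη
      have hηpos : 0 < η := by rw [hη]; linarith
      obtain ⟨q, b, hqb, hqx⟩ := affine_minorant f hbot hconv hlsc x hfxt (A - η)
        (by rw [hAx]; exact_mod_cast (by linarith : A - η < A))
      have hy0ex : ∃ y0 : X, ((B - η : ℝ) : EReal) < ((p y0 : ℝ) : EReal) - f y0 := by
        by_contra hno
        push_neg at hno
        have hle : fconj f p ≤ ((B - η : ℝ) : EReal) := by
          unfold fconj; exact iSup_le hno
        rw [hBx] at hle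
        have := EReal.coe_le_coe_iff.1 hle
        linarith
      obtain ⟨y0, hy0⟩ := hy0ex
      have hy0t : f y0 ≠ ⊤ := by
        intro h; rw [h] at hy0; simp at hy0
      have hy0A : f y0 = (((f y0).toReal : ℝ) : EReal) := (EReal.coe_toReal hy0t (hbot y0)).symm
      set t0 := (f y0).toReal with ht0
      have hy0r : B - η < p y0 - t0 := by
        rw [hy0A, ← EReal.coe_sub] at hy0; exact_mod_cast hy0
      have hfq : fconj f q ≤ (b : EReal) := by
        unfold fconj; apply iSup_le; intro y
        calc ((q y : ℝ) : EReal) - f y ≤ ((q y : ℝ) : EReal) - ((q y - b : ℝ) : EReal) :=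
              EReal.sub_le_sub le_rfl (hqb y)
          _ = ((b : ℝ) : EReal) := by rw [← EReal.coe_sub]; norm_num
      have hu := hineq (y0, q)
      simp only [map_sub, ContinuousLinearMap.sub_apply] at hu
      rw [hAx, hBx, hy0A, ← EReal.coe_add, ← EReal.coe_add] at hu
      have hu2 : ((A + B + (p y0 - p x + (q x - p x)) : ℝ) : EReal) ≤
          ((t0 + b + 2 * ε : ℝ) : EReal) := by
        refine le_trans hu ?_
        rw [show ((t0 + b + 2 * ε : ℝ) : EReal) = ((t0 : ℝ) : EReal) + ((b : ℝ) : EReal)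
          + ((2 * ε : ℝ) : EReal) by rw [← EReal.coe_add, ← EReal.coe_add]]
        exact add_le_add (add_le_add le_rfl hfq) le_rfl
      have hu3 := EReal.coe_le_coe_iff.1 hu2
      rw [hη] at hηpos
      linarith
    refine ⟨hfxt, fun y => ?_⟩
    by_cases hyt : f y = ⊤
    · rw [hyt, EReal.top_add_of_ne_bot (EReal.coe_ne_bot ε)]
      exact le_top
    · have hyA : f y = (((f y).toReal : ℝ) : EReal) := (EReal.coe_toReal hyt (hbot y)).symm
      have hfy := fconj_lower f p y
      rw [hBx, hyA, ← EReal.coe_sub] at hfy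
      have hfy' : p y - (f y).toReal ≤ B := EReal.coe_le_coe_iff.1 hfy
      rw [hAx, hyA, ← EReal.coe_add, ← EReal.coe_add]
      apply EReal.coe_le_coe_iff.2
      rw [map_sub]
      linarith
  · rintro ⟨hfxt, hsub⟩
    have hAx : f x = (((f x).toReal : ℝ) : EReal) := (EReal.coe_toReal hfxt (hbot x)).symm
    set A := (f x).toReal with hA
    have hBle : fconj f p ≤ ((p x + ε - A : ℝ) : EReal) := by
      unfold fconj; apply iSup_le; intro y
      by_cases hyt : f y = ⊤
      · rw [hyt]
        simp
      · have hyA : f y = (((f y).toReal : ℝ) : EReal) := (EReal.coe_toReal hyt (hbot y)).symm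
        have h1 := hsub y
        rw [hAx, hyA, ← EReal.coe_add, ← EReal.coe_add] at h1
        have h2 := EReal.coe_le_coe_iff.1 h1
        rw [map_sub] at h2
        rw [hyA, ← EReal.coe_sub]
        exact EReal.coe_le_coe_iff.2 (by linarith)
    have hfct : fconj f p ≠ ⊤ := by
      intro h; rw [h] at hBle
      exact EReal.coe_ne_top _ (top_le_iff.1 hBle)
    have hBx : fconj f p = (((fconj f p).toReal : ℝ) : EReal) :=
      (EReal.coe_toReal hfct (hfcbot p)).symm
    set B := (fconj f p).toReal with hB
    have hBr : B ≤ p x + ε - A := by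
      rw [hBx] at hBle; exact_mod_cast hBle
    refine ⟨?_, ?_⟩
    · rw [hAx, hBx, ← EReal.coe_add]; exact EReal.coe_ne_top _
    · rintro ⟨y, q⟩
      have h1 : ((A + (p y - p x) : ℝ) : EReal) ≤ f y + (ε : EReal) := by
        have h0 := hsub y
        rw [hAx, ← EReal.coe_add, map_sub] at h0
        exact h0
      have hq : ((q x - A : ℝ) : EReal) ≤ fconj f q := by
        have h0 := fconj_lower f q x
        rwa [hAx, ← EReal.coe_sub] at h0
      have h2 : ((B + (q x - p x) : ℝ) : EReal) ≤ fconj f q + (ε : EReal) := by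
        calc ((B + (q x - p x) : ℝ) : EReal) ≤ ((q x - A + ε : ℝ) : EReal) := by
              exact_mod_cast (by linarith : B + (q x - p x) ≤ q x - A + ε)
          _ = ((q x - A : ℝ) : EReal) + (ε : EReal) := by rw [← EReal.coe_add]
          _ ≤ fconj f q + (ε : EReal) := add_le_add hq le_rfl
      have hsum := add_le_add h1 h2
      rw [hAx, hBx]
      simp only [map_sub, ContinuousLinearMap.sub_apply]
      calc ((A : ℝ) : EReal) + ((B : ℝ) : EReal) + ((p y - p x + (q x - p x) : ℝ) : EReal)
          = ((A + (p y - p x) : ℝ) : EReal) + ((B + (q x - p x) : ℝ) : EReal) := by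
            norm_cast
            ring
        _ ≤ (f y + (ε : EReal)) + (fconj f q + (ε : EReal)) := hsum
        _ = f y + fconj f q + ((2 * ε : ℝ) : EReal) := by
            rw [show ((2 * ε : ℝ) : EReal) = (ε : EReal) + (ε : EReal) by
              norm_cast; ring]
            abel
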